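/- The set of k-projective series, i.e., formal power series Σ a(n) z^n with (a(n)) a k-projective sequence over a field K, forms a subring of K[[z]] (closed under addition and multiplication, and containing 0 and 1). -/

import Mathlib

/-- A sequence `a : ℕ → K` is `k`-projective if there is a bound `d` (independent of `e`)
such that for every `e`, every section `n ↦ a (k^e * n + j)` with `j < k^e` lies in a
`K`-submodule of sequences generated by `d` sequences. -/
def kProjective (k : ℕ) (K : Type*) [Field K] (a : ℕ → K) : Prop :=
  ∃ d : ℕ, ∀ e : ℕ, ∃ g : Fin d → (ℕ → K),
    ∀ j < k ^ e, (fun n => a (k ^ e * n + j)) ∈ Submodule.span K (Set.range g)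

section Aux

variable {K : Type*} [Field K]

/-- Convolution (Cauchy product) of sequences as a bilinear map. -/
noncomputable def convB : (ℕ → K) →ₗ[K] (ℕ → K) →ₗ[K] (ℕ → K) :=
  LinearMap.mk₂ K (fun a b => fun n => ∑ p ∈ Finset.HasAntidiagonal.antidiagonal n, a p.1 * b p.2)
    (by
      intro a a' b; funext n
      simp [add_mul, Finset.sum_add_distrib])
    (by
      intro c a b; funext n
      simp [Finset.mul_sum, mul_assoc])
    (by
      intro a b b'; funext n
      simp [mul_add, Finset.sum_add_distrib])
    (by
      intro c a b; funext n
      simp [Finset.mul_sum, mul_left_comm])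

lemma convB_apply (u v : ℕ → K) (n : ℕ) :
    convB u v n = ∑ p ∈ Finset.HasAntidiagonal.antidiagonal n, u p.1 * v p.2 := rfl

/-- Shift a sequence by one (prepend a zero), as a linear map. -/
noncomputable def shiftL : (ℕ → K) →ₗ[K] (ℕ → K) where
  toFun a := fun n => if n = 0 then 0 else a (n - 1)
  map_add' := by
    intro a b; funext n
    by_cases h : n = 0 <;> simp [h]
  map_smul' := by
    intro c a; funext n
    by_cases h : n = 0 <;> simp [h]

lemma shiftL_apply (u : ℕ → K) (n : ℕ) :
    shiftL u n = if n = 0 then 0 else u (n - 1) := rfl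

lemma conv_mem_span {da db : ℕ} {g : Fin da → ℕ → K} {h : Fin db → ℕ → K}
    {u v : ℕ → K} (hu : u ∈ Submodule.span K (Set.range g))
    (hv : v ∈ Submodule.span K (Set.range h)) :
    convB u v ∈ Submodule.span K
      (Set.range fun p : Fin da × Fin db => convB (g p.1) (h p.2)) := by
  induction hu using Submodule.span_induction with
  | mem x hx =>
    induction hv using Submodule.span_induction with
    | mem y hy =>
      obtain ⟨s, rfl⟩ := hx; obtain ⟨t, rfl⟩ := hy
      exact Submodule.subset_span ⟨(s, t), rfl⟩
    | zero => rw [map_zero]; exact Submodule.zero_mem _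
    | add y z _ _ hy hz => rw [map_add]; exact Submodule.add_mem _ hy hz
    | smul c y _ hy => rw [map_smul]; exact Submodule.smul_mem _ _ hy
  | zero => rw [map_zero, LinearMap.zero_apply]; exact Submodule.zero_mem _
  | add x y _ _ hx hy => rw [map_add, LinearMap.add_apply]; exact Submodule.add_mem _ hx hy
  | smul c x _ hx => rw [map_smul, LinearMap.smul_apply]; exact Submodule.smul_mem _ _ hx

lemma kProjective_of_fintype {k : ℕ} {a : ℕ → K} {ι : Type} [Fintype ι]
    (h : ∀ e : ℕ, ∃ g : ι → ℕ → K, ∀ j < k ^ e,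
      (fun n => a (k ^ e * n + j)) ∈ Submodule.span K (Set.range g)) :
    kProjective k K a := by
  refine ⟨Fintype.card ι, fun e => ?_⟩
  obtain ⟨g, hg⟩ := h e
  refine ⟨g ∘ (Fintype.equivFin ι).symm, fun j hj => ?_⟩
  rw [Set.range_comp, Equiv.range_eq_univ, Set.image_univ]
  exact hg j hj

/-- Decomposition of a sum over an initial segment according to residues mod `m`. -/
lemma range_decomp (m j n : ℕ) (hj : j < m) (f : ℕ → K) :
    ∑ x ∈ Finset.range (m * n + j + 1), f x
      = ∑ i ∈ Finset.range m, ∑ p ∈ Finset.range (if i ≤ j then n + 1 else n), f (m * p + i) := by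
  have hm : 0 < m := lt_of_le_of_lt (Nat.zero_le j) hj
  rw [Finset.sum_sigma']
  refine (Finset.sum_nbij' (fun x => (⟨x % m, x / m⟩ : (Σ _i : ℕ, ℕ)))
    (fun x => m * x.2 + x.1) ?_ ?_ ?_ ?_ ?_).symm.symm
  · intro x hx
    rw [Finset.mem_range] at hx
    rw [Finset.mem_sigma, Finset.mem_range, Finset.mem_range]
    dsimp only
    refine ⟨Nat.mod_lt _ hm, ?_⟩
    have hdm := Nat.div_add_mod x m
    split_ifs with hij
    · -- x / m < n + 1
      by_contra hc
      push_neg at hc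
      have h1 : m * (n + 1) ≤ m * (x / m) := Nat.mul_le_mul_left m hc
      have h2 : m * (n + 1) = m * n + m := by ring
      have h3 : m * n + m ≤ x := by
        calc m * n + m = m * (n + 1) := h2.symm
          _ ≤ m * (x / m) := h1
          _ ≤ m * (x / m) + x % m := Nat.le_add_right _ _
          _ = x := hdm
      have : x < m * n + m := lt_of_lt_of_le hx (by omega)
      omega
    · -- x / m < n
      push_neg at hij
      by_contra hc
      push_neg at hc
      have h1 : m * n ≤ m * (x / m) := Nat.mul_le_mul_left m hc
      have h3 : m * n + x % m ≤ x := by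
        calc m * n + x % m ≤ m * (x / m) + x % m := by omega
          _ = x := hdm
      omega
  · intro x hx
    rw [Finset.mem_sigma, Finset.mem_range, Finset.mem_range] at hx
    obtain ⟨hx1, hx2⟩ := hx
    rw [Finset.mem_range]
    split_ifs at hx2 with hij
    · have : m * x.2 ≤ m * n := Nat.mul_le_mul_left m (by omega)
      omega
    · push_neg at hij
      have hx2' : x.2 + 1 ≤ n := hx2
      have : m * (x.2 + 1) ≤ m * n := Nat.mul_le_mul_left m hx2'
      have h2 : m * (x.2 + 1) = m * x.2 + m := by ring
      omega
  · intro x _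
    have h1 : (x % m + m * (x / m)) = x := Nat.mod_add_div x m
    simp only
    omega
  · intro x hx
    rw [Finset.mem_sigma, Finset.mem_range, Finset.mem_range] at hx
    obtain ⟨hx1, _⟩ := hx
    have h1 : (m * x.2 + x.1) % m = x.1 % m := Nat.mul_add_mod m x.2 x.1
    have h2 : (m * x.2 + x.1) / m = x.2 + x.1 / m := by
      rw [Nat.mul_add_div hm]
    have h3 : x.1 % m = x.1 := Nat.mod_eq_of_lt hx1
    have h4 : x.1 / m = 0 := Nat.div_eq_of_lt hx1
    ext <;> simp [h1, h2, h3, h4]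
  · intro x hx
    rw [Finset.mem_range] at hx
    have hdm := Nat.div_add_mod x m
    simp only
    congr 1
    omega

/-- The key identity: a section of a convolution is a finite sum of convolutions of
sections (possibly shifted by one). -/
lemma mul_section (m j : ℕ) (hj : j < m) (a b : ℕ → K) :
    (fun n => ∑ p ∈ Finset.HasAntidiagonal.antidiagonal (m * n + j), a p.1 * b p.2)
      = ∑ i ∈ Finset.range m, (if i ≤ j
          then convB (fun n => a (m * n + i)) (fun n => b (m * n + (j - i)))
          else shiftL (convB (fun n => a (m * n + i)) (fun n => b (m * n + (m + j - i))))) := by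
  funext n
  rw [Finset.sum_apply]
  rw [Finset.Nat.sum_antidiagonal_eq_sum_range_succ_mk]
  rw [range_decomp m j n hj (fun x => a x * b (m * n + j - x))]
  refine Finset.sum_congr rfl fun i hi => ?_
  rw [Finset.mem_range] at hi
  split_ifs with hij
  · rw [convB_apply, Finset.Nat.sum_antidiagonal_eq_sum_range_succ_mk]
    refine Finset.sum_congr rfl fun p hp => ?_
    rw [Finset.mem_range] at hp
    have hpn : p ≤ n := by omega
    obtain ⟨q, rfl⟩ := Nat.exists_eq_add_of_le hpn
    simp only
    congr 2
    have h1 : m * (p + q) = m * p + m * q := by ring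
    have h2 : p + q - p = q := by omega
    rw [h1, h2]
    generalize m * p = A
    generalize m * q = B
    omega
  · push_neg at hij
    rw [shiftL_apply]
    cases n with
    | zero => simp
    | succ n' =>
      rw [if_neg (Nat.succ_ne_zero n')]
      simp only [Nat.add_sub_cancel]
      rw [convB_apply, Finset.Nat.sum_antidiagonal_eq_sum_range_succ_mk]
      refine Finset.sum_congr rfl fun p hp => ?_
      rw [Finset.mem_range] at hp
      have hpn : p ≤ n' := by omega
      obtain ⟨q, rfl⟩ := Nat.exists_eq_add_of_le hpn
      simp only
      congr 2
      have h1 : m * ((p + q) + 1) = m * p + m * q + m := by ring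
      have h2 : p + q - p = q := by omega
      rw [h1, h2]
      generalize m * p = A
      generalize m * q = B
      omega

lemma kProjective_add {k : ℕ} {a b : ℕ → K}
    (ha : kProjective k K a) (hb : kProjective k K b) :
    kProjective k K (fun n => a n + b n) := by
  obtain ⟨da, hga⟩ := ha
  obtain ⟨db, hgb⟩ := hb
  apply kProjective_of_fintype (ι := Fin da ⊕ Fin db)
  intro e
  obtain ⟨g, hg⟩ := hga e
  obtain ⟨h, hh⟩ := hgb e
  refine ⟨Sum.elim g h, fun j hj => ?_⟩
  have h1 := hg j hj
  have h2 := hh j hj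
  have key : (fun n => a (k ^ e * n + j) + b (k ^ e * n + j)) ∈
      Submodule.span K (Set.range (Sum.elim g h)) := by
    have hga' : (fun n => a (k ^ e * n + j)) ∈ Submodule.span K (Set.range (Sum.elim g h)) := by
      refine Submodule.span_mono ?_ h1
      rw [Set.Sum.elim_range]
      exact Set.subset_union_left
    have hgb' : (fun n => b (k ^ e * n + j)) ∈ Submodule.span K (Set.range (Sum.elim g h)) := by
      refine Submodule.span_mono ?_ h2
      rw [Set.Sum.elim_range]
      exact Set.subset_union_right
    exact Submodule.add_mem _ hga' hgb'
  exact key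

lemma kProjective_mul {k : ℕ} (hk : 2 ≤ k) {a b : ℕ → K}
    (ha : kProjective k K a) (hb : kProjective k K b) :
    kProjective k K (fun n => ∑ p ∈ Finset.HasAntidiagonal.antidiagonal n, a p.1 * b p.2) := by
  obtain ⟨da, hga⟩ := ha
  obtain ⟨db, hgb⟩ := hb
  apply kProjective_of_fintype (ι := (Fin da × Fin db) ⊕ (Fin da × Fin db))
  intro e
  obtain ⟨g, hg⟩ := hga e
  obtain ⟨h, hh⟩ := hgb e
  refine ⟨Sum.elim (fun p => convB (g p.1) (h p.2)) (fun p => shiftL (convB (g p.1) (h p.2))),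
    fun j hj => ?_⟩
  have hm : 0 < k ^ e := Nat.pow_pos (by omega)
  show (fun n => ∑ p ∈ Finset.HasAntidiagonal.antidiagonal (k ^ e * n + j), a p.1 * b p.2) ∈ _
  rw [mul_section (k ^ e) j hj a b]
  apply Submodule.sum_mem
  intro i hi
  rw [Finset.mem_range] at hi
  split_ifs with hij
  · have h1 := hg i hi
    have h2 := hh (j - i) (lt_of_le_of_lt (Nat.sub_le j i) hj)
    have hmem := conv_mem_span h1 h2
    refine Submodule.span_mono ?_ hmem
    rintro x ⟨p, rfl⟩
    exact ⟨Sum.inl p, rfl⟩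
  · push_neg at hij
    have h1 := hg i hi
    have h2 := hh (k ^ e + j - i) (by omega)
    have hmem := conv_mem_span h1 h2
    have hmem2 := Submodule.apply_mem_span_image_of_mem_span shiftL hmem
    refine Submodule.span_mono ?_ hmem2
    rintro x ⟨y, ⟨p, rfl⟩, rfl⟩
    exact ⟨Sum.inr p, rfl⟩

end Aux

/-- The set of -projective series, i.e. generating functions of -projective
sequences, is a subring of the power series ring: it contains 0 and 1 and is closed under
addition and multiplication. -/
theorem kProjectiveSeries_subring {K : Type*} [Field K] {k : ℕ} (hk : 2 ≤ k) :
    (0 : PowerSeries K) ∈ {f : PowerSeries K | ∃ a : ℕ → K, kProjective k K a ∧ f = PowerSeries.mk a} ∧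
    (1 : PowerSeries K) ∈ {f : PowerSeries K | ∃ a : ℕ → K, kProjective k K a ∧ f = PowerSeries.mk a} ∧
    (∀ f g : PowerSeries K,
      f ∈ {f : PowerSeries K | ∃ a : ℕ → K, kProjective k K a ∧ f = PowerSeries.mk a} →
      g ∈ {f : PowerSeries K | ∃ a : ℕ → K, kProjective k K a ∧ f = PowerSeries.mk a} →
      f + g ∈ {f : PowerSeries K | ∃ a : ℕ → K, kProjective k K a ∧ f = PowerSeries.mk a}) ∧
    (∀ f g : PowerSeries K,
      f ∈ {f : PowerSeries K | ∃ a : ℕ → K, kProjective k K a ∧ f = PowerSeries.mk a} →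
      g ∈ {f : PowerSeries K | ∃ a : ℕ → K, kProjective k K a ∧ f = PowerSeries.mk a} →
      f * g ∈ {f : PowerSeries K | ∃ a : ℕ → K, kProjective k K a ∧ f = PowerSeries.mk a}) := by
  refine ⟨?_, ?_, ?_, ?_⟩
  · -- zero
    refine ⟨fun _ => 0, ⟨0, fun e => ⟨fun i => i.elim0, fun j _ => ?_⟩⟩, ?_⟩
    · exact Submodule.zero_mem _
    · ext n
      simp [PowerSeries.coeff_mk]
  · -- one
    refine ⟨fun n => if n = 0 then 1 else 0, ⟨1, fun e => ?_⟩, ?_⟩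
    · refine ⟨fun _ => (fun n => if n = 0 then 1 else 0), fun j hj => ?_⟩
      have hm : 0 < k ^ e := Nat.pow_pos (by omega)
      by_cases hj0 : j = 0
      · subst hj0
        have : (fun n => if k ^ e * n + 0 = 0 then (1 : K) else 0)
            = fun n => if n = 0 then (1 : K) else 0 := by
          funext n
          by_cases hn : n = 0
          · simp [hn]
          · have : k ^ e * n + 0 ≠ 0 := by positivity
            simp [hn, this]
            omega
        rw [this]
        exact Submodule.subset_span ⟨0, rfl⟩
      · have : (fun n => if k ^ e * n + j = 0 then (1 : K) else 0) = fun _ => (0 : K) := by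
          funext n
          have : k ^ e * n + j ≠ 0 := by omega
          rw [if_neg this]
        rw [this]
        exact Submodule.zero_mem _
    · ext n
      simp [PowerSeries.coeff_mk, PowerSeries.coeff_one]
  · -- add
    rintro f g ⟨a, ha, rfl⟩ ⟨b, hb, rfl⟩
    refine ⟨fun n => a n + b n, kProjective_add ha hb, ?_⟩
    ext n
    simp [PowerSeries.coeff_mk]
  · -- mul
    rintro f g ⟨a, ha, rfl⟩ ⟨b, hb, rfl⟩
    refine ⟨fun n => ∑ p ∈ Finset.HasAntidiagonal.antidiagonal n, a p.1 * b p.2,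
      kProjective_mul hk ha hb, ?_⟩
    ext n
    rw [PowerSeries.coeff_mul, PowerSeries.coeff_mk]
    refine Finset.sum_congr rfl fun p _ => ?_
    rw [PowerSeries.coeff_mk, PowerSeries.coeff_mk]
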